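/- Let G be a finite bipartite graph whose vertex classes are variable nodes and check nodes, in which every variable node has degree d_v ≥ 3. Let T be a nonempty set of variable nodes and let I be the subgraph of G induced by T together with all check nodes adjacent to some element of T. If every variable node in T has at least ⌈d_v/2⌉ neighboring check nodes whose degree in I is even, then I contains a cycle (i.e., I is not a forest). -/

import Mathlib

open SimpleGraph

/-- In a finite graph with at least one edge, in which every non-isolated vertex has
two distinct neighbors, there is a cycle. -/
lemma aux_not_acyclic_of_two_neighbors {W : Type*} [Fintype W] (G : SimpleGraph W)
    (hne : ∃ a b, G.Adj a b)
    (h2 : ∀ v : W, (∃ u, G.Adj v u) → ∃ u w, u ≠ w ∧ G.Adj v u ∧ G.Adj v w) :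
    ¬ G.IsAcyclic := by
  classical
  intro hac
  obtain ⟨a0, b0, hab⟩ := hne
  have : Nonempty W := ⟨a0⟩
  set P : ℕ → Prop := fun n => ∃ (a b : W) (p : G.Walk a b), p.IsPath ∧ p.length = n with hPdef
  have hP1 : P 1 := ⟨a0, b0, Walk.cons hab Walk.nil, by simp [hab.ne], by simp⟩
  have hcard : (1 : ℕ) ≤ Fintype.card W := Fintype.card_pos
  set N := Nat.findGreatest P (Fintype.card W) with hNdef
  have hPN : P N := Nat.findGreatest_spec hcard hP1
  have hN1 : 1 ≤ N := Nat.le_findGreatest hcard hP1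
  obtain ⟨a, b, p, hp, hlen⟩ := hPN
  -- every neighbor of b lies on p
  have hmem : ∀ x, G.Adj b x → x ∈ p.support := by
    intro x hx
    by_contra hxs
    have hrev : (p.concat hx).reverse.IsPath := by
      rw [Walk.reverse_concat]
      exact hp.reverse.cons (by
        rw [Walk.support_reverse, List.mem_reverse]; exact hxs)
    have hq : (p.concat hx).IsPath := by
      have := hrev.reverse
      rwa [Walk.reverse_reverse] at this
    have hlt : N < (p.concat hx).length := by
      rw [Walk.length_concat, hlen]; omega
    have hle : (p.concat hx).length ≤ Fintype.card W := le_of_lt hq.length_lt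
    exact Nat.findGreatest_is_greatest hlt hle ⟨a, x, p.concat hx, hq, rfl⟩
  -- b is not isolated
  have hbne : ∃ u, G.Adj b u := by
    have hnil : ¬ p.reverse.Nil := by
      rw [Walk.not_nil_iff_lt_length, Walk.length_reverse, hlen]; omega
    obtain ⟨u, h, q, -⟩ := Walk.not_nil_iff.mp hnil
    exact ⟨u, h⟩
  obtain ⟨u, w, huw, hu, hw⟩ := h2 b hbne
  -- key : any neighbor of b is the second vertex of p.reverse
  have key : ∀ x, G.Adj b x → p.reverse.getVert 1 = x := by
    intro x hx
    have hxsup : x ∈ p.reverse.support := by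
      rw [Walk.support_reverse, List.mem_reverse]; exact hmem x hx
    have hqp : p.reverse.IsPath := hp.reverse
    have hr : (p.reverse.takeUntil x hxsup).IsPath := hqp.takeUntil hxsup
    have he : (Walk.cons hx Walk.nil : G.Walk b x).IsPath := by simp [hx.ne]
    have heq : (⟨p.reverse.takeUntil x hxsup, hr⟩ : G.Path b x) =
        ⟨Walk.cons hx Walk.nil, he⟩ := hac.path_unique _ _
    have hrw : p.reverse.takeUntil x hxsup = Walk.cons hx Walk.nil :=
      Subtype.ext_iff.mp heq
    have hspec := p.reverse.take_spec hxsup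
    calc p.reverse.getVert 1
        = ((p.reverse.takeUntil x hxsup).append (p.reverse.dropUntil x hxsup)).getVert 1 := by
          rw [hspec]
      _ = x := by
          rw [Walk.getVert_append, hrw]
          simp [Walk.getVert_zero]
  exact huw ((key u hu).symm.trans (key w hw))

/-- The subgraph induced by a set `T` of variable nodes in a bipartite (Tanner-style)
graph with variable nodes `V`, check nodes `C` and adjacency relation `E`: the simple
graph on `V ⊕ C` whose edges are exactly the edges of the original graph incident to a
variable node in `T` (check nodes not adjacent to `T` are isolated). -/
def inducedSubgraph {V C : Type*} (E : V → C → Prop) (T : Set V) :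
    SimpleGraph (V ⊕ C) :=
  SimpleGraph.fromRel (fun x y =>
    ∃ v c, x = Sum.inl v ∧ y = Sum.inr c ∧ v ∈ T ∧ E v c)

/-- In a finite bipartite graph where every variable node has degree
`dv ≥ 3`, if `T` is a nonempty set of variable nodes such that every variable node in `T`
has at least `⌈dv/2⌉` neighboring check nodes whose degree in the subgraph induced by `T`
is even, then that induced subgraph contains a cycle (is not acyclic). -/
theorem induced_subgraph_has_cycle
    {V C : Type*} [Fintype V] [Fintype C]
    (E : V → C → Prop) [∀ v c, Decidable (E v c)]
    (dv : ℕ) (hdv : 3 ≤ dv)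
    (hdeg : ∀ v : V, ((Finset.univ : Finset C).filter (fun c => E v c)).card = dv)
    (T : Finset V) (hT : T.Nonempty)
    (hEven : ∀ v ∈ T,
      (dv + 1) / 2 ≤
        ((Finset.univ : Finset C).filter (fun c =>
          E v c ∧ Even ((T.filter (fun u => E u c)).card))).card) :
    ¬ (inducedSubgraph E (↑T : Set V)).IsAcyclic := by
  classical
  set I := inducedSubgraph E (↑T : Set V) with hIdef
  set dC : C → ℕ := fun c => (T.filter fun u => E u c).card with hdCdef
  set S : (V ⊕ C) → Prop :=
    Sum.elim (fun v => v ∈ T) (fun c => Even (dC c) ∧ 0 < dC c) with hSdef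
  set H : SimpleGraph (V ⊕ C) :=
    { Adj := fun x y => I.Adj x y ∧ S x ∧ S y
      symm := ⟨fun x y h => ⟨h.1.symm, h.2.2, h.2.1⟩⟩
      loopless := ⟨fun x h => I.loopless.irrefl x h.1⟩ } with hHdef
  have hHI : H ≤ I := fun x y h => h.1
  intro hac
  have hacH : H.IsAcyclic := by
    intro v c hc
    exact hac (c.mapLe hHI) ((SimpleGraph.Walk.mapLe_isCycle hHI).mpr hc)
  -- basic adjacency fact
  have key : ∀ v ∈ T, ∀ c : C, E v c → Even (dC c) →
      H.Adj (Sum.inl v) (Sum.inr c) := by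
    intro v hv c hedge heven
    refine ⟨?_, hv, heven, ?_⟩
    · rw [hIdef, inducedSubgraph, SimpleGraph.fromRel_adj]
      exact ⟨by simp, Or.inl ⟨v, c, rfl, rfl, hv, hedge⟩⟩
    · exact Finset.card_pos.mpr ⟨v, Finset.mem_filter.mpr ⟨hv, hedge⟩⟩
  have h2le : 2 ≤ (dv + 1) / 2 := by omega
  refine aux_not_acyclic_of_two_neighbors H ?_ ?_ hacH
  · -- there is an edge
    obtain ⟨v0, hv0⟩ := hT
    have h := hEven v0 hv0
    have : 0 < ((Finset.univ : Finset C).filter (fun c =>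
        E v0 c ∧ Even ((T.filter (fun u => E u c)).card))).card := by omega
    obtain ⟨c, hc⟩ := Finset.card_pos.mp this
    rw [Finset.mem_filter] at hc
    exact ⟨Sum.inl v0, Sum.inr c, key v0 hv0 c hc.2.1 hc.2.2⟩
  · -- every non-isolated vertex has two distinct neighbors
    rintro (v | c) ⟨x, hx⟩
    · have hv : v ∈ T := hx.2.1
      have h := hEven v hv
      have h1 : 1 < ((Finset.univ : Finset C).filter (fun c =>
          E v c ∧ Even ((T.filter (fun u => E u c)).card))).card := by omega
      obtain ⟨c₁, hc₁, c₂, hc₂, hcc⟩ := Finset.one_lt_card.mp h1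
      rw [Finset.mem_filter] at hc₁ hc₂
      exact ⟨Sum.inr c₁, Sum.inr c₂, by simp [hcc],
        key v hv c₁ hc₁.2.1 hc₁.2.2, key v hv c₂ hc₂.2.1 hc₂.2.2⟩
    · have hc : Even (dC c) ∧ 0 < dC c := hx.2.1
      have h2 : 2 ≤ dC c := by
        obtain ⟨k, hk⟩ := hc.1
        omega
      obtain ⟨u₁, hu₁, u₂, hu₂, huu⟩ := Finset.one_lt_card.mp (by omega : 1 < dC c)
      rw [Finset.mem_filter] at hu₁ hu₂
      exact ⟨Sum.inl u₁, Sum.inl u₂, by simp [huu],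
        (key u₁ hu₁.1 c hu₁.2 hc.1).symm, (key u₂ hu₂.1 c hu₂.2 hc.1).symm⟩
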